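/- For every integer i with 1 ≤ i ≤ g, the integers r_i satisfy the symmetry r_i = r_{g+1−i}. -/

import Mathlib

open Finset

private lemma pascal_step (m : ℕ) (f : ℕ → ℤ) :
    ∑ k ∈ range (m + 2), (-1 : ℤ) ^ k * ((m + 1).choose k : ℤ) * f k
      = ∑ k ∈ range (m + 1), (-1 : ℤ) ^ k * (m.choose k : ℤ) * (f k - f (k + 1)) := by
  have hA : ∑ k ∈ range (m + 2), (-1 : ℤ) ^ k * (m.choose k : ℤ) * f k
      = ∑ k ∈ range (m + 1), (-1 : ℤ) ^ k * (m.choose k : ℤ) * f k := by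
    rw [Finset.sum_range_succ, Nat.choose_succ_self]
    simp
  have hA' : ∑ k ∈ range (m + 2), (-1 : ℤ) ^ k * (m.choose k : ℤ) * f k
      = (∑ k ∈ range (m + 1), (-1 : ℤ) ^ (k+1) * (m.choose (k+1) : ℤ) * f (k+1)) + f 0 := by
    rw [Finset.sum_range_succ']; simp
  rw [Finset.sum_range_succ' (fun k => (-1 : ℤ) ^ k * ((m + 1).choose k : ℤ) * f k) (m+1)]
  have key : ∀ k ∈ range (m+1),
      (-1 : ℤ) ^ (k+1) * ((m + 1).choose (k+1) : ℤ) * f (k+1)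
        = -((-1:ℤ)^k * (m.choose k : ℤ) * f (k+1)) + (-1:ℤ)^(k+1) * (m.choose (k+1) : ℤ) * f (k+1) := by
    intro k _
    have h : ((m + 1).choose (k+1) : ℤ) = (m.choose k : ℤ) + (m.choose (k+1) : ℤ) := by
      exact_mod_cast congrArg (Nat.cast : ℕ → ℤ) (Nat.choose_succ_succ m k)
    rw [h]; ring
  rw [Finset.sum_congr rfl key, Finset.sum_add_distrib]
  have h2 : ∑ k ∈ range (m+1), (-1:ℤ)^(k+1) * (m.choose (k+1) : ℤ) * f (k+1)
      = (∑ k ∈ range (m + 1), (-1 : ℤ) ^ k * (m.choose k : ℤ) * f k) - f 0 := by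
    rw [← hA, hA']; ring
  have h3 : ∀ k ∈ range (m+1), (-1:ℤ)^k * (m.choose k : ℤ) * (f k - f (k+1))
      = (-1:ℤ)^k * (m.choose k : ℤ) * f k - (-1:ℤ)^k * (m.choose k : ℤ) * f (k+1) := by
    intro k _; ring
  rw [h2, Finset.sum_congr rfl h3, Finset.sum_sub_distrib, Finset.sum_neg_distrib]
  simp
  ring

private lemma altsum_one (n : ℕ) (hn : 1 ≤ n) :
    ∑ k ∈ range (n + 1), (-1 : ℤ) ^ k * (n.choose k : ℤ) = 0 := by
  rw [Int.alternating_sum_range_choose, if_neg (by omega)]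

private lemma lemJ : ∀ b n a : ℕ, 1 ≤ n → b < n → n ≤ a →
    ∑ k ∈ range (n + 1), (-1 : ℤ) ^ k * (n.choose k : ℤ) * ((a - k).choose b : ℤ) = 0 := by
  intro b
  induction b with
  | zero =>
    intro n a hn _ _
    have : ∀ k ∈ range (n+1), (-1 : ℤ) ^ k * (n.choose k : ℤ) * ((a - k).choose 0 : ℤ)
        = (-1:ℤ)^k * (n.choose k : ℤ) := by
      intro k _; simp
    rw [Finset.sum_congr rfl this]
    exact altsum_one n hn
  | succ b ih =>
    intro n a hn hb ha
    obtain ⟨m, rfl⟩ : ∃ m, n = m + 1 := ⟨n - 1, by omega⟩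
    rw [show m + 1 + 1 = m + 2 from rfl,
        pascal_step m (fun k => ((a - k).choose (b+1) : ℤ))]
    have key : ∀ k ∈ range (m + 1),
        (-1 : ℤ) ^ k * (m.choose k : ℤ) *
          (((a - k).choose (b+1) : ℤ) - ((a - (k+1)).choose (b+1) : ℤ))
        = (-1:ℤ)^k * (m.choose k : ℤ) * (((a - 1 - k).choose b : ℤ)) := by
      intro k hk
      simp only [Finset.mem_range] at hk
      have h1 : a - k = (a - 1 - k) + 1 := by omega
      have h2 : a - (k+1) = a - 1 - k := by omega
      rw [h1, h2, Nat.choose_succ_succ]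
      push_cast
      ring
    rw [Finset.sum_congr rfl key]
    exact ih m (a-1) (by omega) (by omega) (by omega)

private lemma lemI1 : ∀ g : ℕ, ∀ n : ℕ, g < n → ∀ x : ℤ,
    ∑ k ∈ range (n + 1), (-1 : ℤ) ^ k * (n.choose k : ℤ) * (x - k) ^ g = 0 := by
  intro g
  induction g using Nat.strong_induction_on with
  | _ g IH =>
    intro n hn x
    match g, IH with
    | 0, _ =>
      have : ∀ k ∈ range (n+1), (-1 : ℤ) ^ k * (n.choose k : ℤ) * (x - k) ^ 0
          = (-1:ℤ)^k * (n.choose k : ℤ) := by intro k _; simp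
      rw [Finset.sum_congr rfl this]
      exact altsum_one n (by omega)
    | (e+1), IH =>
      obtain ⟨m, rfl⟩ : ∃ m, n = m + 1 := ⟨n - 1, by omega⟩
      rw [show m + 1 + 1 = m + 2 from rfl,
          pascal_step m (fun k => (x - k) ^ (e+1))]
      have key : ∀ k ∈ range (m + 1),
          (-1 : ℤ) ^ k * (m.choose k : ℤ) * ((x - k) ^ (e+1) - (x - (k+1:ℕ)) ^ (e+1))
          = ∑ j ∈ range (e+1), ((e+1).choose j : ℤ) *
              ((-1:ℤ)^k * (m.choose k : ℤ) * ((x - 1) - k) ^ j) := by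
        intro k hk
        have hexp : (x - k) ^ (e+1) = ∑ j ∈ range (e+2), ((x-1) - k) ^ j * 1 ^ (e+1-j) * ((e+1).choose j : ℤ) := by
          have h0 : x - k = ((x - 1) - k) + 1 := by ring
          rw [h0, add_pow]
        rw [hexp, Finset.sum_range_succ]
        have h1 : (x - ((k:ℤ)+1)) = (x - 1) - k := by ring
        push_cast
        rw [h1]
        simp only [one_pow, Nat.choose_self, Nat.cast_one, mul_one]
        rw [add_sub_cancel_right, Finset.mul_sum]
        exact Finset.sum_congr rfl (fun j _ => by ring)
      rw [Finset.sum_congr rfl key, Finset.sum_comm]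
      refine Finset.sum_eq_zero (fun j hj => ?_)
      simp only [Finset.mem_range] at hj
      rw [← Finset.mul_sum, IH j (by omega) m (by omega) (x-1), mul_zero]

private def Efun (g i : ℕ) : ℤ :=
  ∑ k ∈ range i, (-1 : ℤ) ^ k * ((g+1).choose k : ℤ) * ((i : ℤ) - k) ^ g

private lemma neg_one_pow_sub (M k : ℕ) (h : k ≤ M) :
    ((-1 : ℤ)) ^ (M - k) = (-1)^M * (-1)^k := by
  have h1 : (-1 : ℤ)^(M-k) * (-1)^k = (-1)^M := by
    rw [← pow_add]; congr 1; omega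
  have h2 : ((-1:ℤ)^k) * ((-1)^k) = 1 := by
    rw [← pow_add]; exact Even.neg_one_pow ⟨k, rfl⟩
  calc (-1 : ℤ)^(M-k) = (-1)^(M-k) * ((-1)^k * (-1)^k) := by rw [h2, mul_one]
    _ = ((-1)^(M-k) * (-1)^k) * (-1)^k := by ring
    _ = (-1)^M * (-1)^k := by rw [h1]

private lemma E_symm (g : ℕ) (hg : 1 ≤ g) (i : ℕ) (h1 : 1 ≤ i) (h2 : i ≤ g) :
    Efun g i = Efun g (g + 1 - i) := by
  have hfull := lemI1 g (g+1) (by omega) (i : ℤ)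
  rw [show g + 1 + 1 = g + 2 from rfl, Finset.range_eq_Ico,
    ← Finset.sum_Ico_consecutive _ (Nat.zero_le i) (by omega : i ≤ g + 2)] at hfull
  have hfirst : ∑ k ∈ Finset.Ico 0 i, (-1:ℤ)^k * ((g+1).choose k : ℤ) * ((i:ℤ) - k)^g
      = Efun g i := by
    rw [← Finset.range_eq_Ico]; rfl
  have hsecond : ∑ k ∈ Finset.Ico i (g+2), (-1:ℤ)^k * ((g+1).choose k : ℤ) * ((i:ℤ) - k)^g
      = ∑ k ∈ range (g + 2 - i), -((-1:ℤ)^k * ((g+1).choose k : ℤ) * (((g+1-i : ℕ):ℤ) - k)^g) := by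
    refine Finset.sum_nbij' (fun k => g + 1 - k) (fun k => g + 1 - k) ?_ ?_ ?_ ?_ ?_
    · intro a ha; simp only [Finset.mem_Ico] at ha; simp only [Finset.mem_range]; omega
    · intro a ha; simp only [Finset.mem_range] at ha; simp only [Finset.mem_Ico]; omega
    · intro a ha; simp only [Finset.mem_Ico] at ha
      show g + 1 - (g + 1 - a) = a; omega
    · intro a ha; simp only [Finset.mem_range] at ha
      show g + 1 - (g + 1 - a) = a; omega
    · intro a ha
      simp only [Finset.mem_Ico] at ha
      show (-1:ℤ)^a * ((g+1).choose a : ℤ) * ((i:ℤ) - a)^g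
        = -((-1:ℤ)^(g+1-a) * ((g+1).choose (g+1-a) : ℤ) * (((g+1-i:ℕ):ℤ) - ((g+1-a:ℕ):ℤ))^g)
      have hc : (((g+1).choose (g + 1 - a) : ℕ) : ℤ) = ((g+1).choose a : ℤ) := by
        rw [Nat.choose_symm (by omega : a ≤ g + 1)]
      have hs := neg_one_pow_sub (g+1) a (by omega)
      have hbi : ((g + 1 - i : ℕ) : ℤ) = (g:ℤ) + 1 - i := by
        rw [Nat.cast_sub (by omega)]; push_cast; ring
      have hba : ((g + 1 - a : ℕ) : ℤ) = (g:ℤ) + 1 - a := by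
        rw [Nat.cast_sub (by omega)]; push_cast; ring
      have hb : ((i:ℤ) - a) ^ g = (-1:ℤ)^g * (((g:ℤ)+1-i) - ((g:ℤ)+1-a)) ^ g := by
        rw [show (i:ℤ) - a = -(((g:ℤ)+1-i) - ((g:ℤ)+1-a)) by ring, neg_pow]
      rw [hc, hs, hbi, hba, hb, pow_succ]
      ring
  have hthird : ∑ k ∈ range (g + 2 - i), -((-1:ℤ)^k * ((g+1).choose k : ℤ) * (((g+1-i : ℕ):ℤ) - k)^g)
      = - Efun g (g+1-i) := by
    rw [show g + 2 - i = (g + 1 - i) + 1 by omega, Finset.sum_range_succ]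
    have hz : (((g+1-i : ℕ):ℤ) - ((g+1-i : ℕ):ℤ))^g = 0 := by
      rw [sub_self, zero_pow (by omega : g ≠ 0)]
    rw [hz, Finset.sum_neg_distrib]
    simp [Efun]
  rw [hfirst, hsecond, hthird] at hfull
  linarith

private def cfun (g t : ℕ) : ℤ :=
  ∑ k ∈ range (t+1), (-1:ℤ)^k * ((g+1).choose k : ℤ) * ((g - 1 + t - k).choose (g-1) : ℤ)

private lemma cfun_zero (g : ℕ) : cfun g 0 = 1 := by
  simp [cfun]

private lemma cfun_one (g : ℕ) (hg : 1 ≤ g) : cfun g 1 = -1 := by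
  have hgc : g.choose (g-1) = g := by
    have h := Nat.choose_symm (Nat.sub_le g 1)
    rw [show g - (g-1) = 1 by omega, Nat.choose_one_right] at h
    omega
  unfold cfun
  rw [Finset.sum_range_succ, Finset.sum_range_succ, Finset.sum_range_zero]
  rw [show g - 1 + 1 - 0 = g by omega, show g - 1 + 1 - 1 = g - 1 by omega, hgc]
  simp [Nat.choose_one_right]

private lemma cfun_eq_zero (g t : ℕ) (hg : 1 ≤ g) (ht : 2 ≤ t) : cfun g t = 0 := by
  have hJ := lemJ (g-1) (g+1) (g-1+t) (by omega) (by omega) (by omega)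
  rw [show g + 1 + 1 = g + 2 from rfl] at hJ
  have e1 : cfun g t
      = ∑ k ∈ range (g+t+2), (-1:ℤ)^k * ((g+1).choose k : ℤ) * ((g - 1 + t - k).choose (g-1) : ℤ) := by
    unfold cfun
    refine Finset.sum_subset (Finset.range_subset_range.mpr (by omega)) ?_
    intro k hk hk2
    simp only [Finset.mem_range] at hk hk2
    rcases le_or_gt k (g+1) with h | h
    · have hz : (g - 1 + t - k).choose (g-1) = 0 := Nat.choose_eq_zero_of_lt (by omega)
      rw [hz]; simp
    · have hz : (g+1).choose k = 0 := Nat.choose_eq_zero_of_lt (by omega)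
      rw [hz]; simp
  have e2 : ∑ k ∈ range (g+2), (-1:ℤ)^k * ((g+1).choose k : ℤ) * (((g - 1 + t) - k).choose (g-1) : ℤ)
      = ∑ k ∈ range (g+t+2), (-1:ℤ)^k * ((g+1).choose k : ℤ) * ((g - 1 + t - k).choose (g-1) : ℤ) := by
    refine Finset.sum_subset (Finset.range_subset_range.mpr (by omega)) ?_
    intro k hk hk2
    simp only [Finset.mem_range] at hk hk2
    have hz : (g+1).choose k = 0 := Nat.choose_eq_zero_of_lt (by omega)
    rw [hz]; simp
  rw [e1, ← e2]
  exact hJ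

private lemma key_identity (g : ℕ) (hg : 1 ≤ g) (i : ℕ) (hi : 1 ≤ i) :
    ∑ j ∈ Finset.Icc 1 i, Efun g j * (Nat.choose (g + i - j - 1) (g - 1) : ℤ)
      = (i : ℤ) ^ g - ((i : ℤ) - 1) ^ g := by
  have step1 : ∀ j ∈ Finset.Icc 1 i,
      Efun g j * (Nat.choose (g + i - j - 1) (g - 1) : ℤ)
        = ∑ k ∈ range j, (-1:ℤ)^k * ((g+1).choose k : ℤ) * ((j:ℤ) - k)^g
            * (Nat.choose (g + i - j - 1) (g - 1) : ℤ) := by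
    intro j _; rw [Efun, Finset.sum_mul]
  rw [Finset.sum_congr rfl step1, Finset.sum_sigma']
  have step2 : ∑ p ∈ (Finset.Icc 1 i).sigma (fun j => range j),
      (-1:ℤ)^p.2 * ((g+1).choose p.2 : ℤ) * ((p.1:ℤ) - p.2)^g
        * (Nat.choose (g + i - p.1 - 1) (g - 1) : ℤ)
      = ∑ p ∈ (Finset.Icc 1 i).sigma (fun m => range (i + 1 - m)),
      (-1:ℤ)^p.2 * ((g+1).choose p.2 : ℤ) * ((p.1:ℤ))^g
        * (Nat.choose (g - 1 + (i - p.1) - p.2) (g - 1) : ℤ) := by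
    refine Finset.sum_nbij' (fun p => ⟨p.1 - p.2, p.2⟩) (fun p => ⟨p.1 + p.2, p.2⟩) ?_ ?_ ?_ ?_ ?_
    · rintro ⟨j, k⟩ h
      simp only [Finset.mem_sigma, Finset.mem_Icc, Finset.mem_range] at h ⊢
      omega
    · rintro ⟨m, k⟩ h
      simp only [Finset.mem_sigma, Finset.mem_Icc, Finset.mem_range] at h ⊢
      omega
    · rintro ⟨j, k⟩ h
      simp only [Finset.mem_sigma, Finset.mem_Icc, Finset.mem_range] at h
      have hjk : j - k + k = j := by omega
      simp [hjk]
    · rintro ⟨m, k⟩ h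
      simp only [Finset.mem_sigma, Finset.mem_Icc, Finset.mem_range] at h
      have hmk : m + k - k = m := by omega
      simp [hmk]
    · rintro ⟨j, k⟩ h
      simp only [Finset.mem_sigma, Finset.mem_Icc, Finset.mem_range] at h
      have hcast : ((j - k : ℕ) : ℤ) = (j : ℤ) - k := by
        rw [Nat.cast_sub (by omega)]
      have hch : g + i - j - 1 = g - 1 + (i - (j - k)) - k := by omega
      simp only
      rw [hcast, hch]
  rw [step2, Finset.sum_sigma]
  have step3 : ∀ m ∈ Finset.Icc 1 i,
      (∑ k ∈ range (i + 1 - m), (-1:ℤ)^k * ((g+1).choose k : ℤ) * ((m:ℤ))^g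
        * (Nat.choose (g - 1 + (i - m) - k) (g - 1) : ℤ))
      = (m:ℤ)^g * cfun g (i - m) := by
    intro m hm
    simp only [Finset.mem_Icc] at hm
    rw [cfun, Finset.mul_sum, show i + 1 - m = (i - m) + 1 by omega]
    refine Finset.sum_congr rfl (fun k _ => by ring)
  rw [Finset.sum_congr rfl step3]
  rcases Nat.lt_or_ge i 2 with hi2 | hi2
  · have : i = 1 := by omega
    subst this
    rw [Finset.Icc_self, Finset.sum_singleton, Nat.sub_self, cfun_zero]
    simp [zero_pow (by omega : g ≠ 0)]
  · obtain ⟨n, rfl⟩ : ∃ n, i = n + 2 := ⟨i - 2, by omega⟩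
    rw [show n + 2 = (n + 1) + 1 from rfl, Finset.sum_Icc_succ_top (by omega),
      Finset.sum_Icc_succ_top (by omega)]
    have hz : ∀ m ∈ Finset.Icc 1 n, (m:ℤ)^g * cfun g (n + 1 + 1 - m) = 0 := by
      intro m hm
      simp only [Finset.mem_Icc] at hm
      rw [cfun_eq_zero g _ hg (by omega), mul_zero]
    rw [Finset.sum_eq_zero hz, show n + 1 + 1 - (n + 1) = 1 by omega,
      Nat.sub_self, cfun_zero, cfun_one g hg]
    push_cast
    ring

private lemma r_eq_E (g : ℕ) (hg : 1 ≤ g) (r : ℕ → ℤ)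
    (hr : ∀ i : ℕ, 1 ≤ i →
      r i = (i : ℤ) ^ g - ((i : ℤ) - 1) ^ g -
        ∑ j ∈ Finset.Icc 1 (i - 1), r j * (Nat.choose (g + i - j - 1) (g - 1) : ℤ)) :
    ∀ i : ℕ, 1 ≤ i → r i = Efun g i := by
  intro i
  induction i using Nat.strong_induction_on with
  | _ i IH =>
    intro hi
    obtain ⟨n, rfl⟩ : ∃ n, i = n + 1 := ⟨i - 1, by omega⟩
    have hsum : ∑ j ∈ Finset.Icc 1 n, r j * (Nat.choose (g + (n+1) - j - 1) (g - 1) : ℤ)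
        = ∑ j ∈ Finset.Icc 1 n, Efun g j * (Nat.choose (g + (n+1) - j - 1) (g - 1) : ℤ) := by
      refine Finset.sum_congr rfl (fun j hj => ?_)
      simp only [Finset.mem_Icc] at hj
      rw [IH j (by omega) (by omega)]
    have hkey := key_identity g hg (n+1) (by omega)
    rw [Finset.sum_Icc_succ_top (by omega)] at hkey
    have hch : (Nat.choose (g + (n+1) - (n+1) - 1) (g-1) : ℤ) = 1 := by
      rw [show g + (n+1) - (n+1) - 1 = g - 1 by omega, Nat.choose_self]
      norm_num
    rw [hch, mul_one] at hkey
    have h0 := hr (n+1) (by omega)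
    rw [show n + 1 - 1 = n from rfl, hsum] at h0
    linarith [hkey, h0]



/-- With `r` defined by the recursion
`r i = i^g - (i-1)^g - ∑_{j=1}^{i-1} r j * C(g+i-j-1, g-1)` (for `i ≥ 1`),
one has the symmetry `r i = r (g+1-i)` for `1 ≤ i ≤ g`. -/
theorem r_symm (g : ℕ) (hg : 1 ≤ g) (r : ℕ → ℤ)
    (hr : ∀ i : ℕ, 1 ≤ i →
      r i = (i : ℤ) ^ g - ((i : ℤ) - 1) ^ g -
        ∑ j ∈ Finset.Icc 1 (i - 1), r j * (Nat.choose (g + i - j - 1) (g - 1) : ℤ)) :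
    ∀ i : ℕ, 1 ≤ i → i ≤ g → r i = r (g + 1 - i) := by
  intro i hi1 hi2
  rw [r_eq_E g hg r hr i hi1, r_eq_E g hg r hr (g+1-i) (by omega),
    ← E_symm g hg i hi1 hi2]
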